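/- Suppose τ ≤ η in the uncrossing partial order on P_n and i ∈ A(τ) ∩ B(η). Then τ ≤ s_i·η and s_i·τ ≤ η. -/

import Mathlib

open scoped Classical

/-- `x` lies strictly inside the arc going (cyclically) from `a` to `b`. -/
def InArc (m : ℕ) (a b x : ZMod m) : Prop :=
  0 < (x - a).val ∧ (x - a).val < (b - a).val

/-- The chords `{a,b}` and `{c,d}` on the circle `ℤ/mℤ` cross: all four endpoints are
distinct and the endpoints alternate in cyclic order. -/
def Crosses (m : ℕ) (a b c d : ZMod m) : Prop :=
  a ≠ b ∧ c ≠ d ∧ c ≠ a ∧ c ≠ b ∧ d ≠ a ∧ d ≠ b ∧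
    (InArc m a b c ↔ InArc m b a d)

/-- A matching of the `2n` points `ℤ/2nℤ`: a fixed-point-free involution. -/
def IsMatching (n : ℕ) (τ : ZMod (2 * n) → ZMod (2 * n)) : Prop :=
  (∀ i, τ (τ i) = i) ∧ ∀ i, τ i ≠ i

/-- The number of crossings `c(τ)`: each unordered crossing pair of chords of `τ`
is counted `8` times by ordered pairs of representatives. -/
noncomputable def crossNum (n : ℕ) (τ : ZMod (2 * n) → ZMod (2 * n)) : ℕ :=
  {p : ZMod (2 * n) × ZMod (2 * n) |
    Crosses (2 * n) p.1 (τ p.1) p.2 (τ p.2)}.ncard / 8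

/-- Replace the pairs `{a, τ a}` and `{b, τ b}` of `τ` by `{a, b}` and `{τ a, τ b}`. -/
def swapPair (n : ℕ) (τ : ZMod (2 * n) → ZMod (2 * n)) (a b : ZMod (2 * n)) :
    ZMod (2 * n) → ZMod (2 * n) :=
  fun x => if x = a then b else if x = b then a
    else if x = τ a then τ b else if x = τ b then τ a else τ x

/-- `τ'` is obtained from `τ` by a single uncrossing move: two crossing pairs
`{a, τ a}`, `{b, τ b}` are replaced by `{a,b}, {τ a, τ b}` or by `{a, τ b}, {τ a, b}`. -/
def UncrossingMove (n : ℕ) (τ τ' : ZMod (2 * n) → ZMod (2 * n)) : Prop :=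
  ∃ a b, Crosses (2 * n) a (τ a) b (τ b) ∧
    (τ' = swapPair n τ a b ∨ τ' = swapPair n τ a (τ b))

/-- The uncrossing partial order on matchings: the reflexive-transitive closure of the
relation `τ' < τ` whenever `τ'` is obtained from `τ` by an uncrossing move and
`c(τ') = c(τ) - 1`. -/
def UncrossLE (n : ℕ) (τ σ : ZMod (2 * n) → ZMod (2 * n)) : Prop :=
  Relation.ReflTransGen (fun x y => IsMatching n x ∧ IsMatching n y ∧
    UncrossingMove n y x ∧ crossNum n y = crossNum n x + 1) τ σ

/-- `s_i · τ := s_i ∘ τ ∘ s_i` where `s_i` is the transposition of `i` and `i+1`. -/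
def sMove (n : ℕ) (i : ZMod (2 * n)) (τ : ZMod (2 * n) → ZMod (2 * n)) :
    ZMod (2 * n) → ZMod (2 * n) :=
  fun x => Equiv.swap i (i + 1) (τ (Equiv.swap i (i + 1) x))

/-- `i ∈ A(τ)`: `τ i ≠ i+1` and the chords `{i, τ i}` and `{i+1, τ (i+1)}` do not cross. -/
def inA (n : ℕ) (τ : ZMod (2 * n) → ZMod (2 * n)) (i : ZMod (2 * n)) : Prop :=
  τ i ≠ i + 1 ∧ ¬ Crosses (2 * n) i (τ i) (i + 1) (τ (i + 1))

/-- `i ∈ B(τ)`: `τ i ≠ i+1` and the chords `{i, τ i}` and `{i+1, τ (i+1)}` cross. -/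
def inB (n : ℕ) (τ : ZMod (2 * n) → ZMod (2 * n)) (i : ZMod (2 * n)) : Prop :=
  τ i ≠ i + 1 ∧ Crosses (2 * n) i (τ i) (i + 1) (τ (i + 1))

/-- `i ∈ C(τ)`: `i` is matched with `i+1`. -/
def inC (n : ℕ) (τ : ZMod (2 * n) → ZMod (2 * n)) (i : ZMod (2 * n)) : Prop :=
  τ i = i + 1

/-- Elements of `P̂_n`, modelled inside `Option`: `none` is the adjoined bottom `0̂`,
and `some τ` belongs to `P̂_n` when `τ` is a matching. -/
def inPhat (n : ℕ) (x : Option (ZMod (2 * n) → ZMod (2 * n))) : Prop :=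
  ∀ τ ∈ x, IsMatching n τ

/-- The order on `P̂_n`: `0̂` is below everything, and matchings are compared by the
uncrossing order. -/
def hatLE (n : ℕ) (x y : Option (ZMod (2 * n) → ZMod (2 * n))) : Prop :=
  x = none ∨ ∃ τ σ, x = some τ ∧ y = some σ ∧ UncrossLE n τ σ

/-- The rank function of `P̂_n`: `c(0̂) = -1` and `c(some τ) = crossNum τ`. -/
noncomputable def hatRank (n : ℕ) (x : Option (ZMod (2 * n) → ZMod (2 * n))) : ℤ :=
  x.elim (-1) fun τ => (crossNum n τ : ℤ)


set_option linter.unusedSectionVars false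
set_option linter.unusedVariables false
set_option linter.unreachableTactic false
set_option linter.unusedTactic false

section Geom
variable {m : ℕ} [NeZero m]

lemma vsub (x y : ZMod m) :
    (x - y).val + y.val = x.val ∨ (x - y).val + y.val = x.val + m := by
  have h := ZMod.val_add (x - y) y
  rw [sub_add_cancel] at h
  have h1 : (x - y).val < m := ZMod.val_lt _
  have h2 : y.val < m := ZMod.val_lt _
  rcases Nat.lt_or_ge ((x - y).val + y.val) m with h4 | h4
  · left; rw [Nat.mod_eq_of_lt h4] at h; omega
  · right; rw [Nat.mod_eq_sub_mod h4, Nat.mod_eq_of_lt (by omega)] at h; omega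

lemma vsub3 (a p q : ZMod m) :
    (p - q).val + (q - a).val = (p - a).val ∨
    (p - q).val + (q - a).val = (p - a).val + m := by
  have h := vsub (p - a) (q - a)
  rwa [sub_sub_sub_cancel_right] at h

lemma vlt (x : ZMod m) : x.val < m := ZMod.val_lt x

lemma vne {x y : ZMod m} (h : x ≠ y) : (x - y).val ≠ 0 := by
  simp only [ne_eq, ZMod.val_eq_zero, sub_eq_zero]; exact h

lemma vinj {a p q : ZMod m} (h : (p - a).val = (q - a).val) : p = q := by
  have := ZMod.val_injective m h
  rwa [sub_left_inj] at this

lemma vinj' {a p q : ZMod m} (h : p ≠ q) : (p - a).val ≠ (q - a).val :=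
  fun hh => h (vinj hh)

lemma inArcIff {a b x : ZMod m} (h : x ≠ a) :
    InArc m a b x ↔ (x - a).val < (b - a).val := by
  unfold InArc
  have := vne h
  constructor
  · rintro ⟨_, h2⟩; exact h2
  · intro h2; exact ⟨Nat.pos_of_ne_zero this, h2⟩

lemma inArcRev {a b d : ZMod m} (hab : a ≠ b) (hd : d ≠ b) :
    InArc m b a d ↔ (b - a).val < (d - a).val := by
  unfold InArc
  have h1 := vsub3 a d b
  have h2 := vsub3 a a b
  rw [sub_self, ZMod.val_zero] at h2
  have h3 := vne hd
  have h4 := vne (Ne.symm hab)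
  have h5 := vinj' (a := a) hd
  have g1 := vlt (d - a); have g2 := vlt (b - a); have g3 := vlt (a - b)
  have g4 := vlt (d - b)
  constructor
  · rintro ⟨p1, p2⟩; rcases h1 with h1 | h1 <;> rcases h2 with h2 | h2 <;> omega
  · intro p; rcases h1 with h1 | h1 <;> rcases h2 with h2 | h2 <;>
      refine ⟨by omega, by omega⟩

lemma crossChar {a b c d : ZMod m} : Crosses m a b c d ↔
    (a ≠ b ∧ c ≠ d ∧ c ≠ a ∧ c ≠ b ∧ d ≠ a ∧ d ≠ b ∧
      ((c - a).val < (b - a).val ↔ (b - a).val < (d - a).val)) := by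
  unfold Crosses
  constructor <;> rintro ⟨h1, h2, h3, h4, h5, h6, h7⟩ <;>
    refine ⟨h1, h2, h3, h4, h5, h6, ?_⟩
  · rwa [inArcIff h3, inArcRev h1 h6] at h7
  · rwa [inArcIff h3, inArcRev h1 h6]

lemma symm2 {a b c d : ZMod m} (H : Crosses m a b c d) : Crosses m b a c d := by
  rw [crossChar] at H ⊢
  obtain ⟨h1, h2, h3, h4, h5, h6, h7⟩ := H
  refine ⟨h1.symm, h2, h4, h3, h6, h5, ?_⟩
  have f1 := vsub3 a c b
  have f2 := vsub3 a d b
  have f3 := vsub3 a a b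
  rw [sub_self, ZMod.val_zero] at f3
  have := vne h3; have := vne h4; have := vne h5; have := vne h6
  have := vne h1; have := vne (Ne.symm h1); have := vne h2
  have := vinj' (a := a) h4; have := vinj' (a := a) h6
  have := vinj' (a := a) (h2 : c ≠ d)
  have := vlt (c - a); have := vlt (d - a); have := vlt (b - a)
  have := vlt (c - b); have := vlt (d - b); have := vlt (a - b)
  rcases f1 with f1 | f1 <;> rcases f2 with f2 | f2 <;> rcases f3 with f3 | f3 <;>
    constructor <;> intro <;> omega

lemma symm3 {a b c d : ZMod m} (H : Crosses m a b c d) : Crosses m a b d c := by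
  rw [crossChar] at H ⊢
  obtain ⟨h1, h2, h3, h4, h5, h6, h7⟩ := H
  refine ⟨h1, h2.symm, h5, h6, h3, h4, ?_⟩
  have := vinj' (a := a) h2
  have := vinj' (a := a) h3; have := vinj' (a := a) h4
  have := vinj' (a := a) h5; have := vinj' (a := a) h6
  constructor <;> intro <;> omega

lemma symm1 {a b c d : ZMod m} (H : Crosses m a b c d) : Crosses m c d a b := by
  rw [crossChar] at H ⊢
  obtain ⟨h1, h2, h3, h4, h5, h6, h7⟩ := H
  refine ⟨h2, h1, h3.symm, h5.symm, h4.symm, h6.symm, ?_⟩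
  have f1 := vsub3 a a c
  have f2 := vsub3 a d c
  have f3 := vsub3 a b c
  rw [sub_self, ZMod.val_zero] at f1
  have := vne h3; have := vne h4; have := vne h5; have := vne h6
  have := vne h1; have := vne (Ne.symm h1); have := vne h2; have := vne (Ne.symm h2)
  have := vne (Ne.symm h3); have := vne (Ne.symm h5)
  have := vinj' (a := a) h4; have := vinj' (a := a) h6
  have := vinj' (a := a) h2; have := vinj' (a := a) h3; have := vinj' (a := a) h5
  have := vinj' (a := c) h1
  have := vlt (c - a); have := vlt (d - a); have := vlt (b - a)
  have := vlt (a - c); have := vlt (d - c); have := vlt (b - c)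
  rcases f1 with f1 | f1 <;> rcases f2 with f2 | f2 <;> rcases f3 with f3 | f3 <;>
    constructor <;> intro <;> omega


-- new material

lemma vone (hm : 1 < m) (i : ZMod m) : ((i + 1) - i : ZMod m).val = 1 := by
  rw [add_sub_cancel_left, ZMod.val_one_eq_one_mod, Nat.mod_eq_of_lt hm]

lemma hii (hm : 1 < m) (i : ZMod m) : i + 1 ≠ i := by
  intro h
  have h1 := vone hm i
  rw [h, sub_self, ZMod.val_zero] at h1
  omega

lemma vtwo (hm : 1 < m) {i x : ZMod m} (h1 : x ≠ i) (h2 : x ≠ i + 1) :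
    2 ≤ (x - i).val := by
  have g1 := vne h1
  have g2 := vinj' (a := i) h2
  rw [vone hm] at g2
  omega

lemma L0a (hm : 1 < m) {i c d : ZMod m} : ¬ Crosses m i (i + 1) c d := by
  rw [crossChar]
  rintro ⟨h1, h2, h3, h4, h5, h6, h7⟩
  rw [vone hm] at h7
  have := vne h3
  have := vtwo hm h5 h6
  omega

lemma L0b (hm : 1 < m) {i c d : ZMod m} : ¬ Crosses m (i + 1) i c d := by
  rw [crossChar]
  rintro ⟨h1, h2, h3, h4, h5, h6, h7⟩
  have f1 := vsub3 i i (i + 1)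
  rw [sub_self, ZMod.val_zero, vone hm] at f1
  have f2 := vsub3 i c (i + 1)
  have f3 := vsub3 i d (i + 1)
  rw [vone hm] at f2 f3
  have := vtwo hm h4 h3
  have := vtwo hm h6 h5
  have := vlt (c - i); have := vlt (d - i); have := vlt (c - (i+1))
  have := vlt (d - (i+1)); have := vlt (i - (i+1))
  omega

lemma G2char (hm : 1 < m) {i x y : ZMod m} (hx1 : x ≠ i) (hx2 : x ≠ i + 1)
    (hy1 : y ≠ i) (hy2 : y ≠ i + 1) (hxy : x ≠ y) :
    Crosses m i x (i + 1) y ↔ (x - i).val < (y - i).val := by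
  rw [crossChar]
  have g1 := vtwo hm hx1 hx2
  have g2 := vtwo hm hy1 hy2
  have g3 := vone hm i
  have g4 := vinj' (a := i) hxy
  constructor
  · rintro ⟨h1, h2, h3, h4, h5, h6, h7⟩; omega
  · intro h
    exact ⟨Ne.symm hx1, Ne.symm hy2, hii hm i, Ne.symm hx2, hy1, Ne.symm hxy,
      by omega⟩

lemma CS1 (hm : 1 < m) {i b c d : ZMod m}
    (hb1 : b ≠ i) (hb2 : b ≠ i + 1) (hc1 : c ≠ i) (hc2 : c ≠ i + 1)
    (hd1 : d ≠ i) (hd2 : d ≠ i + 1) :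
    Crosses m i b c d ↔ Crosses m (i + 1) b c d := by
  rw [crossChar, crossChar]
  have f1 := vsub3 i b (i + 1)
  have f2 := vsub3 i c (i + 1)
  have f3 := vsub3 i d (i + 1)
  rw [vone hm] at f1 f2 f3
  have := vtwo hm hb1 hb2
  have := vtwo hm hc1 hc2
  have := vtwo hm hd1 hd2
  have := vlt (b - i); have := vlt (c - i); have := vlt (d - i)
  have := vlt (b - (i+1)); have := vlt (c - (i+1)); have := vlt (d - (i+1))
  constructor <;> rintro ⟨h1, h2, h3, h4, h5, h6, h7⟩
  · refine ⟨Ne.symm hb2, h2, hc2, h4, hd2, h6, ?_⟩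
    have := vinj' (a := i) h2
    have := vinj' (a := i) h4
    have := vinj' (a := i) h6
    omega
  · refine ⟨Ne.symm hb1, h2, hc1, h4, hd1, h6, ?_⟩
    have := vinj' (a := i) h2
    have := vinj' (a := i) h4
    have := vinj' (a := i) h6
    omega

lemma G4a {a p b q : ZMod m} (H : Crosses m a p b q) : ¬ Crosses m a b p q := by
  rw [crossChar] at H ⊢
  obtain ⟨h1, h2, h3, h4, h5, h6, h7⟩ := H
  rintro ⟨g1, g2, g3, g4, g5, g6, g7⟩
  have := vinj' (a := a) h4
  have := vinj' (a := a) h2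
  have := vinj' (a := a) h6
  omega

lemma G4b {a p b q : ZMod m} (H : Crosses m a p b q) : ¬ Crosses m a q p b := by
  rw [crossChar] at H ⊢
  obtain ⟨h1, h2, h3, h4, h5, h6, h7⟩ := H
  rintro ⟨g1, g2, g3, g4, g5, g6, g7⟩
  have := vinj' (a := a) h4
  have := vinj' (a := a) h2
  have := vinj' (a := a) h6
  omega

lemma G5core1 {a p b q y z : ZMod m} (H : Crosses m a p b q)
    (T : Crosses m a b y z)
    (hyp : y ≠ p) (hyq : y ≠ q) (hzp : z ≠ p) (hzq : z ≠ q) :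
    Crosses m a p y z ∨ Crosses m b q y z := by
  rw [crossChar] at H T ⊢
  rw [crossChar]
  obtain ⟨h1, h2, h3, h4, h5, h6, h7⟩ := H
  obtain ⟨t1, t2, t3, t4, t5, t6, t7⟩ := T
  have f1 := vsub3 a q b
  have f2 := vsub3 a y b
  have f3 := vsub3 a z b
  have := vlt (p - a); have := vlt (b - a); have := vlt (q - a)
  have := vlt (y - a); have := vlt (z - a)
  have := vlt (q - b); have := vlt (y - b); have := vlt (z - b)
  have := vne h1; have := vne h3; have := vne (h5 : q ≠ a)
  have := vne t3; have := vne t5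
  have := vne h2; have := vne t4; have := vne t6
  have := vinj' (a := a) h3; have := vinj' (a := a) h2; have := vinj' (a := a) h6
  have := vinj' (a := a) t2; have := vinj' (a := a) hyp; have := vinj' (a := a) hyq
  have := vinj' (a := a) hzp; have := vinj' (a := a) hzq
  have := vinj' (a := a) t4; have := vinj' (a := a) t6
  have := vinj' (a := b) hyq; have := vinj' (a := b) hzq; have := vinj' (a := b) t2
  have hval : (((y - a).val < (p - a).val ↔ (p - a).val < (z - a).val)) ∨
      (((y - b).val < (q - b).val ↔ (q - b).val < (z - b).val)) := by
    rcases f1 with f1 | f1 <;> rcases f2 with f2 | f2 <;> rcases f3 with f3 | f3 <;>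
      omega
  rcases hval with hval | hval
  · exact Or.inl ⟨h1, t2, t3, by exact hyp, t5, hzp, hval⟩
  · exact Or.inr ⟨h2, t2, t4, hyq, t6, hzq, hval⟩

lemma G5one {a p b q y z : ZMod m} (H : Crosses m a p b q)
    (T1 : Crosses m y z a b)
    (hpy : p ≠ y) (hpz : p ≠ z) (hqy : q ≠ y) (hqz : q ≠ z) :
    Crosses m y z a p ∨ Crosses m y z b q := by
  rw [crossChar] at H T1
  rw [crossChar, crossChar]
  obtain ⟨h1, h2, h3, h4, h5, h6, h7⟩ := H
  obtain ⟨t1, t2, t3, t4, t5, t6, t7⟩ := T1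
  have f1 := vsub3 y b a
  have f2 := vsub3 y p a
  have f3 := vsub3 y q a
  have := vlt (a - y); have := vlt (b - y); have := vlt (p - y)
  have := vlt (q - y); have := vlt (z - y)
  have := vlt (b - a); have := vlt (p - a); have := vlt (q - a)
  have := vne t3; have := vne t5; have := vne t1
  have := vne hpy; have := vne hqy
  have := vne h1; have := vne h4; have := vne (h5 : q ≠ a); have := vne h6
  have := vne h3; have := vne h2
  have := vinj' (a := y) t4; have := vinj' (a := y) t6
  have := vinj' (a := y) hpz; have := vinj' (a := y) hqz
  have := vinj' (a := y) t2
  have := vinj' (a := y) (h1 : a ≠ p)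
  have := vinj' (a := y) (Ne.symm h5)
  have := vinj' (a := y) (Ne.symm h4)
  have := vinj' (a := y) h2
  have := vinj' (a := y) (Ne.symm h6)
  have hval : (((a - y).val < (z - y).val ↔ (z - y).val < (p - y).val)) ∨
      (((b - y).val < (z - y).val ↔ (z - y).val < (q - y).val)) := by
    rcases f1 with f1 | f1 <;> rcases f2 with f2 | f2 <;> rcases f3 with f3 | f3 <;>
      omega
  rcases hval with hval | hval
  · exact Or.inl ⟨t1, h1, t3, t4, hpy, hpz, hval⟩
  · exact Or.inr ⟨t1, h2, t5, t6, hqy, hqz, hval⟩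

lemma G5two {a p b q y z : ZMod m} (H : Crosses m a p b q)
    (T1 : Crosses m y z a b) (T2 : Crosses m y z p q) :
    Crosses m y z a p ∧ Crosses m y z b q := by
  rw [crossChar] at H T1 T2
  rw [crossChar, crossChar]
  obtain ⟨h1, h2, h3, h4, h5, h6, h7⟩ := H
  obtain ⟨t1, t2, t3, t4, t5, t6, t7⟩ := T1
  obtain ⟨s1, s2, s3, s4, s5, s6, s7⟩ := T2
  have f1 := vsub3 y b a
  have f2 := vsub3 y p a
  have f3 := vsub3 y q a
  have := vlt (a - y); have := vlt (b - y); have := vlt (p - y)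
  have := vlt (q - y); have := vlt (z - y)
  have := vlt (b - a); have := vlt (p - a); have := vlt (q - a)
  have := vne t3; have := vne t5; have := vne t1
  have := vne s3; have := vne s5
  have := vne h1; have := vne h4; have := vne (h5 : q ≠ a); have := vne h6
  have := vne h3; have := vne h2
  have := vinj' (a := y) t4; have := vinj' (a := y) t6
  have := vinj' (a := y) s4; have := vinj' (a := y) s6
  have := vinj' (a := y) t2
  have := vinj' (a := y) (h1 : a ≠ p)
  have := vinj' (a := y) (Ne.symm h5)
  have := vinj' (a := y) (Ne.symm h4)
  have := vinj' (a := y) h2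
  have := vinj' (a := y) (Ne.symm h6)
  have hval : (((a - y).val < (z - y).val ↔ (z - y).val < (p - y).val)) ∧
      (((b - y).val < (z - y).val ↔ (z - y).val < (q - y).val)) := by
    rcases f1 with f1 | f1 <;> rcases f2 with f2 | f2 <;> rcases f3 with f3 | f3 <;>
      omega
  exact ⟨⟨t1, h1, t3, t4, s3, s4, hval.1⟩,
    ⟨t1, h2, t5, t6, s5, s6, hval.2⟩⟩


end Geom


section Func
variable {n : ℕ} {τ σ : ZMod (2 * n) → ZMod (2 * n)} {i a b x : ZMod (2 * n)}

lemma sMove_invol : sMove n i (sMove n i τ) = τ := by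
  funext x; simp [sMove, Equiv.swap_apply_self]

lemma sMove_matching (h : IsMatching n τ) : IsMatching n (sMove n i τ) := by
  constructor
  · intro x; simp [sMove, Equiv.swap_apply_self, h.1]
  · intro x hx
    have := congrArg (Equiv.swap i (i + 1)) hx
    simp only [sMove, Equiv.swap_apply_self] at this
    exact h.2 _ this

lemma sMove_i (h1 : τ (i + 1) ≠ i) (h2 : τ (i + 1) ≠ i + 1) :
    sMove n i τ i = τ (i + 1) := by
  simp [sMove, Equiv.swap_apply_left, Equiv.swap_apply_of_ne_of_ne h1 h2]

lemma sMove_i1 (h1 : τ i ≠ i) (h2 : τ i ≠ i + 1) :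
    sMove n i τ (i + 1) = τ i := by
  simp [sMove, Equiv.swap_apply_right, Equiv.swap_apply_of_ne_of_ne h1 h2]

lemma sMove_other (hx1 : x ≠ i) (hx2 : x ≠ i + 1) (h1 : τ x ≠ i)
    (h2 : τ x ≠ i + 1) : sMove n i τ x = τ x := by
  simp [sMove, Equiv.swap_apply_of_ne_of_ne hx1 hx2,
    Equiv.swap_apply_of_ne_of_ne h1 h2]

lemma sp_a : swapPair n τ a b a = b := by simp [swapPair]

lemma sp_b (h : b ≠ a) : swapPair n τ a b b = a := by simp [swapPair, h]

lemma sp_ta (h1 : τ a ≠ a) (h2 : τ a ≠ b) : swapPair n τ a b (τ a) = τ b := by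
  simp [swapPair, h1, h2]

lemma sp_tb (h1 : τ b ≠ a) (h2 : τ b ≠ b) (h3 : τ b ≠ τ a) :
    swapPair n τ a b (τ b) = τ a := by
  simp [swapPair, h1, h2, h3]

lemma sp_o (h1 : x ≠ a) (h2 : x ≠ b) (h3 : x ≠ τ a) (h4 : x ≠ τ b) :
    swapPair n τ a b x = τ x := by
  simp [swapPair, h1, h2, h3, h4]

lemma conjSwap :
    sMove n i (swapPair n τ a b) =
      swapPair n (sMove n i τ) (Equiv.swap i (i + 1) a) (Equiv.swap i (i + 1) b) := by
  set w := Equiv.swap i (i + 1) with hw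
  have key : ∀ u v : ZMod (2 * n), w u = v ↔ u = w v := by
    intro u v
    constructor <;> rintro rfl <;> rw [hw, Equiv.swap_apply_self]
  have key2 : ∀ u : ZMod (2 * n), w (w u) = u := fun u => by
    rw [hw, Equiv.swap_apply_self]
  funext x
  simp only [sMove, swapPair, ← hw, key2]
  by_cases c1 : w x = a
  · rw [if_pos c1, if_pos ((key _ _).mp c1)]
  · rw [if_neg c1, if_neg (fun h => c1 ((key _ _).mpr h))]
    by_cases c2 : w x = b
    · rw [if_pos c2, if_pos ((key _ _).mp c2)]
    · rw [if_neg c2, if_neg (fun h => c2 ((key _ _).mpr h))]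
      by_cases c3 : w x = τ a
      · rw [if_pos c3, if_pos ((key _ _).mp c3)]
      · rw [if_neg c3, if_neg (fun h => c3 ((key _ _).mpr h))]
        by_cases c4 : w x = τ b
        · rw [if_pos c4, if_pos ((key _ _).mp c4)]
        · rw [if_neg c4, if_neg (fun h => c4 ((key _ _).mpr h))]

end Func

section Func2
variable {n : ℕ} {τ σ : ZMod (2 * n) → ZMod (2 * n)} {i a b x : ZMod (2 * n)}

lemma VERT (hM : IsMatching n σ) (hne : i + 1 ≠ i) (hd : σ i ≠ i + 1) :
    swapPair n σ i (σ (i + 1)) = sMove n i σ := by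
  have inv := hM.1
  have e1 : σ i ≠ i := hM.2 i
  have e2 : σ (i + 1) ≠ i + 1 := hM.2 _
  have e3 : σ (i + 1) ≠ i := by
    intro h
    have := congrArg σ h
    rw [inv] at this
    exact hd this.symm
  have e4 : σ i ≠ σ (i + 1) := by
    intro h
    have := congrArg σ h
    rw [inv, inv] at this
    exact hne this.symm
  funext x
  simp only [swapPair, inv]
  by_cases c1 : x = i
  · subst c1; rw [if_pos rfl]; exact (sMove_i e3 e2).symm
  · rw [if_neg c1]
    by_cases c2 : x = σ (i + 1)
    · subst c2
      rw [if_pos rfl]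
      simp [sMove, Equiv.swap_apply_of_ne_of_ne e3 e2, inv, Equiv.swap_apply_right]
    · rw [if_neg c2]
      by_cases c3 : x = σ i
      · subst c3
        rw [if_pos rfl]
        simp [sMove, Equiv.swap_apply_of_ne_of_ne e1 hd, inv, Equiv.swap_apply_left]
      · rw [if_neg c3]
        by_cases c4 : x = i + 1
        · subst c4; rw [if_pos rfl]; exact (sMove_i1 e1 hd).symm
        · rw [if_neg c4]
          refine (sMove_other c1 c4 ?_ ?_).symm
          · intro h
            have := congrArg σ h
            rw [inv] at this
            exact c3 this
          · intro h
            have := congrArg σ h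
            rw [inv] at this
            exact c2 this

lemma sp_comm (hab : a ≠ b) (h1 : σ a ≠ a) (h2 : σ b ≠ b) (h3 : σ a ≠ b)
    (h4 : σ b ≠ a) (h5 : σ a ≠ σ b) :
    swapPair n σ a b = swapPair n σ b a := by
  funext x
  simp only [swapPair]
  split_ifs <;> first | rfl | grind

lemma sp_inv (hM : IsMatching n σ) (hab : a ≠ b) (h3 : σ a ≠ b)
    (h4 : σ b ≠ a) (h5 : σ a ≠ σ b) :
    swapPair n σ (σ a) (σ b) = swapPair n σ a b := by
  have inv := hM.1
  have h1 : σ a ≠ a := hM.2 a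
  have h2 : σ b ≠ b := hM.2 b
  funext x
  simp only [swapPair, inv]
  clear inv hM
  split_ifs <;> first | rfl | grind

lemma sp_mix (hM : IsMatching n σ) (hab : a ≠ b) (h3 : σ a ≠ b)
    (h4 : σ b ≠ a) (h5 : σ a ≠ σ b) :
    swapPair n σ (σ a) b = swapPair n σ a (σ b) := by
  have inv := hM.1
  have h1 : σ a ≠ a := hM.2 a
  have h2 : σ b ≠ b := hM.2 b
  funext x
  simp only [swapPair, inv]
  clear inv hM
  split_ifs <;> first | rfl | grind

end Func2


noncomputable def cind (n : ℕ) (τ : ZMod (2 * n) → ZMod (2 * n))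
    (x y : ZMod (2 * n)) : ℕ :=
  if Crosses (2 * n) x (τ x) y (τ y) then 1 else 0

noncomputable def NC (n : ℕ) [NeZero (2 * n)]
    (τ : ZMod (2 * n) → ZMod (2 * n)) : ℕ :=
  ∑ x : ZMod (2 * n), ∑ y : ZMod (2 * n), cind n τ x y

section Count
variable {n : ℕ} [NeZero (2 * n)]

lemma crossNum_NC (τ : ZMod (2 * n) → ZMod (2 * n)) :
    crossNum n τ = NC n τ / 8 := by
  have h : {p : ZMod (2 * n) × ZMod (2 * n) |
      Crosses (2 * n) p.1 (τ p.1) p.2 (τ p.2)} =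
      ↑(Finset.univ.filter fun p : ZMod (2 * n) × ZMod (2 * n) =>
        Crosses (2 * n) p.1 (τ p.1) p.2 (τ p.2)) := by
    ext p; simp
  rw [crossNum, h, Set.ncard_coe_finset, Finset.card_filter]
  rw [Fintype.sum_prod_type]
  rfl

lemma NC_split (τ : ZMod (2 * n) → ZMod (2 * n)) (s : Finset (ZMod (2 * n))) :
    NC n τ = ((∑ x ∈ s, ∑ y ∈ s, cind n τ x y)
      + (∑ x ∈ s, ∑ y ∈ sᶜ, cind n τ x y))
      + ((∑ x ∈ sᶜ, ∑ y ∈ s, cind n τ x y)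
      + (∑ x ∈ sᶜ, ∑ y ∈ sᶜ, cind n τ x y)) := by
  rw [NC]
  rw [← Finset.sum_add_sum_compl s (fun x => ∑ y : ZMod (2 * n), cind n τ x y)]
  congr 1
  · rw [← Finset.sum_add_distrib]
    exact Finset.sum_congr rfl fun x _ =>
      (Finset.sum_add_sum_compl s (fun y => cind n τ x y)).symm
  · rw [← Finset.sum_add_distrib]
    exact Finset.sum_congr rfl fun x _ =>
      (Finset.sum_add_sum_compl s (fun y => cind n τ x y)).symm

lemma sum4 (f : ZMod (2 * n) → ℕ) (a b c d : ZMod (2 * n))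
    (h1 : a ≠ b) (h2 : a ≠ c) (h3 : a ≠ d) (h4 : b ≠ c) (h5 : b ≠ d) (h6 : c ≠ d) :
    ∑ x ∈ ({a, b, c, d} : Finset (ZMod (2 * n))), f x = f a + f b + f c + f d := by
  rw [Finset.sum_insert (by simp [h1, h2, h3]),
    Finset.sum_insert (by simp [h4, h5]),
    Finset.sum_insert (by simp [h6]), Finset.sum_singleton]
  omega

lemma mem_compl4 {a b c d x : ZMod (2 * n)}
    (h : x ∈ ({a, b, c, d} : Finset (ZMod (2 * n)))ᶜ) :
    x ≠ a ∧ x ≠ b ∧ x ≠ c ∧ x ≠ d := by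
  simp only [Finset.mem_compl, Finset.mem_insert, Finset.mem_singleton] at h
  tauto

lemma cind_symm (τ : ZMod (2 * n) → ZMod (2 * n)) (x y : ZMod (2 * n)) :
    cind n τ x y = cind n τ y x := by
  unfold cind
  exact if_congr ⟨symm1, symm1⟩ rfl rfl

lemma flip_sum (τ : ZMod (2 * n) → ZMod (2 * n)) (s : Finset (ZMod (2 * n))) :
    ∑ x ∈ sᶜ, ∑ y ∈ s, cind n τ x y = ∑ x ∈ s, ∑ y ∈ sᶜ, cind n τ x y := by
  rw [Finset.sum_comm]
  exact Finset.sum_congr rfl fun x _ => Finset.sum_congr rfl fun y _ =>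
    cind_symm τ y x

theorem CN (hm : 1 < 2 * n) {η : ZMod (2 * n) → ZMod (2 * n)}
    {i : ZMod (2 * n)} (hM : IsMatching n η) (hB : inB n η i) :
    crossNum n η = crossNum n (sMove n i η) + 1 := by
  obtain ⟨hB1, X⟩ := hB
  obtain ⟨d1, d2, d3, d4, d5, d6, -⟩ := id X
  -- d1 : i ≠ η i, d2 : i+1 ≠ η (i+1), d3 : i+1 ≠ i, d4 : i+1 ≠ η i,
  -- d5 : η (i+1) ≠ i, d6 : η (i+1) ≠ η i
  set η' := sMove n i η with hη'
  have inv := hM.1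
  have fpf := hM.2
  have eA : η' i = η (i + 1) := sMove_i d5 (Ne.symm d2)
  have eB : η' (i + 1) = η i := sMove_i1 (fpf i) hB1
  have eC : η' (η i) = i + 1 := by
    rw [hη']
    show Equiv.swap i (i+1) (η (Equiv.swap i (i+1) (η i))) = i + 1
    rw [Equiv.swap_apply_of_ne_of_ne (fpf i) hB1, inv, Equiv.swap_apply_left]
  have eD : η' (η (i + 1)) = i := by
    rw [hη']
    show Equiv.swap i (i+1) (η (Equiv.swap i (i+1) (η (i+1)))) = i
    rw [Equiv.swap_apply_of_ne_of_ne d5 (Ne.symm d2), inv, Equiv.swap_apply_right]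
  have eO : ∀ x, x ≠ i → x ≠ i + 1 → x ≠ η i → x ≠ η (i + 1) → η' x = η x := by
    intro x hx1 hx2 hx3 hx4
    refine sMove_other hx1 hx2 ?_ ?_
    · intro h; exact hx3 (by rw [← h, inv]) |>.elim  -- η x = i → x = η i
    · intro h; exact hx4 (by rw [← h, inv]) |>.elim
  have hcc : ∀ x, x ≠ i → x ≠ i + 1 → x ≠ η i → x ≠ η (i + 1) →
      (η x ≠ i ∧ η x ≠ i + 1 ∧ η x ≠ η i ∧ η x ≠ η (i + 1)) := by
    intro x hx1 hx2 hx3 hx4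
    refine ⟨?_, ?_, ?_, ?_⟩
    · intro h; exact hx3 (by rw [← h, inv]) |>.elim
    · intro h; exact hx4 (by rw [← h, inv]) |>.elim
    · intro h
      have := congrArg η h
      rw [inv, inv] at this
      exact hx1 this
    · intro h
      have := congrArg η h
      rw [inv, inv] at this
      exact hx2 this
  -- distinctness package for {i, i+1, η i, η (i+1)}
  have q1 : i ≠ i + 1 := Ne.symm d3
  have q2 : i ≠ η i := d1
  have q3 : i ≠ η (i + 1) := Ne.symm d5
  have q4 : (i+1) ≠ η i := d4
  have q5 : (i+1) ≠ η (i + 1) := d2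
  have q6 : η i ≠ η (i + 1) := Ne.symm d6
  set S4 : Finset (ZMod (2 * n)) := {i, i + 1, η i, η (i + 1)} with hS4
  -- non-crossing core for η'
  have v1 : (η i - i).val < (η (i + 1) - i).val :=
    (G2char hm (Ne.symm q2) hB1 d5 (Ne.symm q5) q6).mp X
  have notCore : ¬ Crosses (2 * n) i (η (i + 1)) (i + 1) (η i) := by
    intro H
    have v2 := (G2char hm d5 (Ne.symm q5) (Ne.symm q2) hB1 d6).mp H
    omega
  -- the sixteen values of cind η on S4 × S4
  have T11 : ∑ x ∈ S4, ∑ y ∈ S4, cind n η x y = 8 := by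
    rw [sum4 _ i (i+1) (η i) (η (i+1)) q1 q2 q3 q4 q5 q6]
    rw [sum4 _ i (i+1) (η i) (η (i+1)) q1 q2 q3 q4 q5 q6]
    rw [sum4 _ i (i+1) (η i) (η (i+1)) q1 q2 q3 q4 q5 q6]
    rw [sum4 _ i (i+1) (η i) (η (i+1)) q1 q2 q3 q4 q5 q6]
    rw [sum4 _ i (i+1) (η i) (η (i+1)) q1 q2 q3 q4 q5 q6]
    simp only [cind, inv]
    rw [if_neg (fun H : Crosses _ i (η i) i (η i) => H.2.2.1 rfl)]
    rw [if_pos X]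
    rw [if_neg (fun H : Crosses _ i (η i) (η i) i => H.2.2.2.1 rfl)]
    rw [if_pos (symm3 X)]
    rw [if_pos (symm1 X)]
    rw [if_neg (fun H : Crosses _ (i+1) (η (i+1)) (i+1) (η (i+1)) => H.2.2.1 rfl)]
    rw [if_pos (symm3 (symm1 X))]
    rw [if_neg (fun H : Crosses _ (i+1) (η (i+1)) (η (i+1)) (i+1) => H.2.2.2.1 rfl)]
    rw [if_neg (fun H : Crosses _ (η i) i i (η i) => H.2.2.2.1 rfl)]
    rw [if_pos (symm2 X)]
    rw [if_neg (fun H : Crosses _ (η i) i (η i) i => H.2.2.1 rfl)]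
    rw [if_pos (symm3 (symm2 X))]
    rw [if_pos (symm2 (symm1 X))]
    rw [if_neg (fun H : Crosses _ (η (i+1)) (i+1) (i+1) (η (i+1)) => H.2.2.2.1 rfl)]
    rw [if_pos (symm3 (symm2 (symm1 X)))]
    rw [if_neg (fun H : Crosses _ (η (i+1)) (i+1) (η (i+1)) (i+1) => H.2.2.1 rfl)]
  have T11' : ∑ x ∈ S4, ∑ y ∈ S4, cind n η' x y = 0 := by
    rw [sum4 _ i (i+1) (η i) (η (i+1)) q1 q2 q3 q4 q5 q6]
    rw [sum4 _ i (i+1) (η i) (η (i+1)) q1 q2 q3 q4 q5 q6]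
    rw [sum4 _ i (i+1) (η i) (η (i+1)) q1 q2 q3 q4 q5 q6]
    rw [sum4 _ i (i+1) (η i) (η (i+1)) q1 q2 q3 q4 q5 q6]
    rw [sum4 _ i (i+1) (η i) (η (i+1)) q1 q2 q3 q4 q5 q6]
    simp only [cind, eA, eB, eC, eD]
    rw [if_neg (fun H : Crosses _ i (η (i+1)) i (η (i+1)) => H.2.2.1 rfl)]
    rw [if_neg (fun H : Crosses _ i (η (i+1)) (i+1) (η i) => notCore H)]
    rw [if_neg (fun H : Crosses _ i (η (i+1)) (η i) (i+1) => notCore (symm3 H))]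
    rw [if_neg (fun H : Crosses _ i (η (i+1)) (η (i+1)) i => H.2.2.2.1 rfl)]
    rw [if_neg (fun H : Crosses _ (i+1) (η i) i (η (i+1)) => notCore (symm1 H))]
    rw [if_neg (fun H : Crosses _ (i+1) (η i) (i+1) (η i) => H.2.2.1 rfl)]
    rw [if_neg (fun H : Crosses _ (i+1) (η i) (η i) (i+1) => H.2.2.2.1 rfl)]
    rw [if_neg (fun H : Crosses _ (i+1) (η i) (η (i+1)) i => notCore (symm1 (symm3 H)))]
    rw [if_neg (fun H : Crosses _ (η i) (i+1) i (η (i+1)) => notCore (symm1 (symm2 H)))]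
    rw [if_neg (fun H : Crosses _ (η i) (i+1) (i+1) (η i) => H.2.2.2.1 rfl)]
    rw [if_neg (fun H : Crosses _ (η i) (i+1) (η i) (i+1) => H.2.2.1 rfl)]
    rw [if_neg (fun H : Crosses _ (η i) (i+1) (η (i+1)) i => notCore (symm1 (symm3 (symm2 H))))]
    rw [if_neg (fun H : Crosses _ (η (i+1)) i i (η (i+1)) => H.2.2.2.1 rfl)]
    rw [if_neg (fun H : Crosses _ (η (i+1)) i (i+1) (η i) => notCore (symm2 H))]
    rw [if_neg (fun H : Crosses _ (η (i+1)) i (η i) (i+1) => notCore (symm3 (symm2 H)))]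
    rw [if_neg (fun H : Crosses _ (η (i+1)) i (η (i+1)) i => H.2.2.1 rfl)]
  -- mixed sums agree pointwise in y ∉ S4
  have hmix : ∀ y ∈ S4ᶜ, ∑ x ∈ S4, cind n η' x y = ∑ x ∈ S4, cind n η x y := by
    intro y hy
    obtain ⟨hy1, hy2, hy3, hy4⟩ := mem_compl4 hy
    obtain ⟨hz1, hz2, hz3, hz4⟩ := hcc y hy1 hy2 hy3 hy4
    rw [sum4 _ i (i+1) (η i) (η (i+1)) q1 q2 q3 q4 q5 q6]
    rw [sum4 _ i (i+1) (η i) (η (i+1)) q1 q2 q3 q4 q5 q6]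
    simp only [cind, eA, eB, eC, eD, eO y hy1 hy2 hy3 hy4, inv]
    have I1 : Crosses (2*n) i (η (i+1)) y (η y) ↔
        Crosses (2*n) (i+1) (η (i+1)) y (η y) :=
      CS1 hm d5 (Ne.symm q5) hy1 hy2 hz1 hz2
    have I2 : Crosses (2*n) (i+1) (η i) y (η y) ↔
        Crosses (2*n) i (η i) y (η y) :=
      (CS1 hm (Ne.symm q2) hB1 hy1 hy2 hz1 hz2).symm
    have I3 : Crosses (2*n) (η i) (i+1) y (η y) ↔
        Crosses (2*n) (η i) i y (η y) := by
      constructor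
      · intro H
        exact symm2 ((CS1 hm (Ne.symm q2) hB1 hy1 hy2 hz1 hz2).mpr (symm2 H))
      · intro H
        exact symm2 ((CS1 hm (Ne.symm q2) hB1 hy1 hy2 hz1 hz2).mp (symm2 H))
    have I4 : Crosses (2*n) (η (i+1)) i y (η y) ↔
        Crosses (2*n) (η (i+1)) (i+1) y (η y) := by
      constructor
      · intro H
        exact symm2 ((CS1 hm d5 (Ne.symm q5) hy1 hy2 hz1 hz2).mp (symm2 H))
      · intro H
        exact symm2 ((CS1 hm d5 (Ne.symm q5) hy1 hy2 hz1 hz2).mpr (symm2 H))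
    rw [if_congr I1 rfl rfl, if_congr I2 rfl rfl, if_congr I3 rfl rfl,
      if_congr I4 rfl rfl]
    omega
  have hmixsum : ∑ x ∈ S4, ∑ y ∈ S4ᶜ, cind n η' x y
      = ∑ x ∈ S4, ∑ y ∈ S4ᶜ, cind n η x y := by
    rw [Finset.sum_comm, Finset.sum_comm (s := S4)]
    exact Finset.sum_congr rfl fun y hy => hmix y hy
  have hccsum : ∑ x ∈ S4ᶜ, ∑ y ∈ S4ᶜ, cind n η' x y
      = ∑ x ∈ S4ᶜ, ∑ y ∈ S4ᶜ, cind n η x y := by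
    refine Finset.sum_congr rfl fun x hx => Finset.sum_congr rfl fun y hy => ?_
    obtain ⟨hx1, hx2, hx3, hx4⟩ := mem_compl4 hx
    obtain ⟨hy1, hy2, hy3, hy4⟩ := mem_compl4 hy
    unfold cind
    rw [eO x hx1 hx2 hx3 hx4, eO y hy1 hy2 hy3 hy4]
  have key : NC n η = NC n η' + 8 := by
    have E := NC_split η S4
    have E' := NC_split η' S4
    have F := flip_sum η S4
    have F' := flip_sum η' S4
    omega
  rw [crossNum_NC, crossNum_NC, key]
  omega

theorem MONO1 (hm : 1 < 2 * n) {σ : ZMod (2 * n) → ZMod (2 * n)}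
    {a b : ZMod (2 * n)} (hM : IsMatching n σ)
    (H : Crosses (2 * n) a (σ a) b (σ b)) :
    crossNum n (swapPair n σ a b) + 1 ≤ crossNum n σ := by
  obtain ⟨e1, e2, e3, e4, e5, e6, -⟩ := id H
  -- e1 : a ≠ σ a, e2 : b ≠ σ b, e3 : b ≠ a, e4 : b ≠ σ a, e5 : σ b ≠ a, e6 : σ b ≠ σ a
  set ρ := swapPair n σ a b with hρ
  have inv := hM.1
  have fpf := hM.2
  have q1 : a ≠ b := Ne.symm e3
  have q2 : a ≠ σ a := e1
  have q3 : a ≠ σ b := Ne.symm e5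
  have q4 : b ≠ σ a := e4
  have q5 : b ≠ σ b := e2
  have q6 : σ a ≠ σ b := Ne.symm e6
  set S4 : Finset (ZMod (2 * n)) := {a, b, σ a, σ b} with hS4
  have ra : ρ a = b := sp_a
  have rb : ρ b = a := sp_b e3
  have rc : ρ (σ a) = σ b := sp_ta (fpf a) (Ne.symm e4)
  have rd : ρ (σ b) = σ a := sp_tb e5 (fpf b) e6
  have ro : ∀ x, x ≠ a → x ≠ b → x ≠ σ a → x ≠ σ b → ρ x = σ x := by
    intro x h1 h2 h3 h4; exact sp_o h1 h2 h3 h4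
  have hcc : ∀ x, x ≠ a → x ≠ b → x ≠ σ a → x ≠ σ b →
      (σ x ≠ a ∧ σ x ≠ b ∧ σ x ≠ σ a ∧ σ x ≠ σ b) := by
    intro x h1 h2 h3 h4
    refine ⟨?_, ?_, ?_, ?_⟩
    · intro h; exact h3 (by rw [← h, inv]) |>.elim
    · intro h; exact h4 (by rw [← h, inv]) |>.elim
    · intro h
      have := congrArg σ h
      rw [inv, inv] at this
      exact h1 this
    · intro h
      have := congrArg σ h
      rw [inv, inv] at this
      exact h2 this
  have N1 : ¬ Crosses (2 * n) a b (σ a) (σ b) := G4a H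
  have T11 : ∑ x ∈ S4, ∑ y ∈ S4, cind n σ x y = 8 := by
    rw [sum4 _ a b (σ a) (σ b) q1 q2 q3 q4 q5 q6]
    rw [sum4 _ a b (σ a) (σ b) q1 q2 q3 q4 q5 q6]
    rw [sum4 _ a b (σ a) (σ b) q1 q2 q3 q4 q5 q6]
    rw [sum4 _ a b (σ a) (σ b) q1 q2 q3 q4 q5 q6]
    rw [sum4 _ a b (σ a) (σ b) q1 q2 q3 q4 q5 q6]
    simp only [cind, inv]
    rw [if_neg (fun W : Crosses _ a (σ a) a (σ a) => W.2.2.1 rfl)]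
    rw [if_pos H]
    rw [if_neg (fun W : Crosses _ a (σ a) (σ a) a => W.2.2.2.1 rfl)]
    rw [if_pos (symm3 H)]
    rw [if_pos (symm1 H)]
    rw [if_neg (fun W : Crosses _ b (σ b) b (σ b) => W.2.2.1 rfl)]
    rw [if_pos (symm3 (symm1 H))]
    rw [if_neg (fun W : Crosses _ b (σ b) (σ b) b => W.2.2.2.1 rfl)]
    rw [if_neg (fun W : Crosses _ (σ a) a a (σ a) => W.2.2.2.1 rfl)]
    rw [if_pos (symm2 H)]
    rw [if_neg (fun W : Crosses _ (σ a) a (σ a) a => W.2.2.1 rfl)]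
    rw [if_pos (symm3 (symm2 H))]
    rw [if_pos (symm2 (symm1 H))]
    rw [if_neg (fun W : Crosses _ (σ b) b b (σ b) => W.2.2.2.1 rfl)]
    rw [if_pos (symm3 (symm2 (symm1 H)))]
    rw [if_neg (fun W : Crosses _ (σ b) b (σ b) b => W.2.2.1 rfl)]
  have T11' : ∑ x ∈ S4, ∑ y ∈ S4, cind n ρ x y = 0 := by
    rw [sum4 _ a b (σ a) (σ b) q1 q2 q3 q4 q5 q6]
    rw [sum4 _ a b (σ a) (σ b) q1 q2 q3 q4 q5 q6]
    rw [sum4 _ a b (σ a) (σ b) q1 q2 q3 q4 q5 q6]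
    rw [sum4 _ a b (σ a) (σ b) q1 q2 q3 q4 q5 q6]
    rw [sum4 _ a b (σ a) (σ b) q1 q2 q3 q4 q5 q6]
    simp only [cind, ra, rb, rc, rd]
    rw [if_neg (fun W : Crosses _ a b a b => W.2.2.1 rfl)]
    rw [if_neg (fun W : Crosses _ a b b a => W.2.2.2.1 rfl)]
    rw [if_neg (fun W : Crosses _ a b (σ a) (σ b) => N1 W)]
    rw [if_neg (fun W : Crosses _ a b (σ b) (σ a) => N1 (symm3 W))]
    rw [if_neg (fun W : Crosses _ b a a b => W.2.2.2.1 rfl)]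
    rw [if_neg (fun W : Crosses _ b a b a => W.2.2.1 rfl)]
    rw [if_neg (fun W : Crosses _ b a (σ a) (σ b) => N1 (symm2 W))]
    rw [if_neg (fun W : Crosses _ b a (σ b) (σ a) => N1 (symm2 (symm3 W)))]
    rw [if_neg (fun W : Crosses _ (σ a) (σ b) a b => N1 (symm1 W))]
    rw [if_neg (fun W : Crosses _ (σ a) (σ b) b a => N1 (symm1 (symm3 W)))]
    rw [if_neg (fun W : Crosses _ (σ a) (σ b) (σ a) (σ b) => W.2.2.1 rfl)]
    rw [if_neg (fun W : Crosses _ (σ a) (σ b) (σ b) (σ a) => W.2.2.2.1 rfl)]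
    rw [if_neg (fun W : Crosses _ (σ b) (σ a) a b => N1 (symm1 (symm2 W)))]
    rw [if_neg (fun W : Crosses _ (σ b) (σ a) b a => N1 (symm1 (symm2 (symm3 W))))]
    rw [if_neg (fun W : Crosses _ (σ b) (σ a) (σ a) (σ b) => W.2.2.2.1 rfl)]
    rw [if_neg (fun W : Crosses _ (σ b) (σ a) (σ b) (σ a) => W.2.2.1 rfl)]
  have perY : ∀ y ∈ S4ᶜ, ∑ x ∈ S4, cind n ρ x y ≤ ∑ x ∈ S4, cind n σ x y := by
    intro y hy
    obtain ⟨hy1, hy2, hy3, hy4⟩ := mem_compl4 hy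
    obtain ⟨hz1, hz2, hz3, hz4⟩ := hcc y hy1 hy2 hy3 hy4
    rw [sum4 _ a b (σ a) (σ b) q1 q2 q3 q4 q5 q6]
    rw [sum4 _ a b (σ a) (σ b) q1 q2 q3 q4 q5 q6]
    simp only [cind, ra, rb, rc, rd, ro y hy1 hy2 hy3 hy4, inv]
    have J1 : Crosses (2*n) a b y (σ y) ↔ Crosses (2*n) y (σ y) a b :=
      ⟨symm1, symm1⟩
    have J2 : Crosses (2*n) b a y (σ y) ↔ Crosses (2*n) y (σ y) a b :=
      ⟨fun h => symm3 (symm1 h), fun h => symm1 (symm3 h)⟩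
    have J3 : Crosses (2*n) (σ a) (σ b) y (σ y) ↔
        Crosses (2*n) y (σ y) (σ a) (σ b) := ⟨symm1, symm1⟩
    have J4 : Crosses (2*n) (σ b) (σ a) y (σ y) ↔
        Crosses (2*n) y (σ y) (σ a) (σ b) :=
      ⟨fun h => symm3 (symm1 h), fun h => symm1 (symm3 h)⟩
    have K1 : Crosses (2*n) a (σ a) y (σ y) ↔ Crosses (2*n) y (σ y) a (σ a) :=
      ⟨symm1, symm1⟩
    have K2 : Crosses (2*n) b (σ b) y (σ y) ↔ Crosses (2*n) y (σ y) b (σ b) :=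
      ⟨symm1, symm1⟩
    have K3 : Crosses (2*n) (σ a) a y (σ y) ↔ Crosses (2*n) y (σ y) a (σ a) :=
      ⟨fun h => symm3 (symm1 h), fun h => symm1 (symm3 h)⟩
    have K4 : Crosses (2*n) (σ b) b y (σ y) ↔ Crosses (2*n) y (σ y) b (σ b) :=
      ⟨fun h => symm3 (symm1 h), fun h => symm1 (symm3 h)⟩
    rw [if_congr J1 rfl rfl, if_congr J2 rfl rfl, if_congr J3 rfl rfl,
      if_congr J4 rfl rfl, if_congr K1 rfl rfl, if_congr K2 rfl rfl,
      if_congr K3 rfl rfl, if_congr K4 rfl rfl]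
    have imp1 : Crosses (2*n) y (σ y) a b →
        Crosses (2*n) y (σ y) a (σ a) ∨ Crosses (2*n) y (σ y) b (σ b) :=
      fun h => G5one H h (Ne.symm hy3) (Ne.symm hz3) (Ne.symm hy4) (Ne.symm hz4)
    have imp2 : Crosses (2*n) y (σ y) (σ a) (σ b) →
        Crosses (2*n) y (σ y) a (σ a) ∨ Crosses (2*n) y (σ y) b (σ b) := by
      intro h
      have H'' : Crosses (2*n) (σ a) a (σ b) b := symm3 (symm2 H)
      exact (G5one H'' h (Ne.symm hy1) (Ne.symm hz1) (Ne.symm hy2)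
        (Ne.symm hz2)).imp symm3 symm3
    have imp3 : Crosses (2*n) y (σ y) a b → Crosses (2*n) y (σ y) (σ a) (σ b) →
        Crosses (2*n) y (σ y) a (σ a) ∧ Crosses (2*n) y (σ y) b (σ b) :=
      fun h1 h2 => G5two H h1 h2
    by_cases c1 : Crosses (2*n) y (σ y) a b <;>
      by_cases c2 : Crosses (2*n) y (σ y) (σ a) (σ b) <;>
      by_cases c3 : Crosses (2*n) y (σ y) a (σ a) <;>
      by_cases c4 : Crosses (2*n) y (σ y) b (σ b) <;>
      simp_all <;> omega
  have hmixsum : ∑ x ∈ S4, ∑ y ∈ S4ᶜ, cind n ρ x y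
      ≤ ∑ x ∈ S4, ∑ y ∈ S4ᶜ, cind n σ x y := by
    rw [Finset.sum_comm, Finset.sum_comm (s := S4)]
    exact Finset.sum_le_sum perY
  have hccsum : ∑ x ∈ S4ᶜ, ∑ y ∈ S4ᶜ, cind n ρ x y
      = ∑ x ∈ S4ᶜ, ∑ y ∈ S4ᶜ, cind n σ x y := by
    refine Finset.sum_congr rfl fun x hx => Finset.sum_congr rfl fun y hy => ?_
    obtain ⟨hx1, hx2, hx3, hx4⟩ := mem_compl4 hx
    obtain ⟨hy1, hy2, hy3, hy4⟩ := mem_compl4 hy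
    unfold cind
    rw [ro x hx1 hx2 hx3 hx4, ro y hy1 hy2 hy3 hy4]
  have key : NC n ρ + 8 ≤ NC n σ := by
    have E := NC_split ρ S4
    have E' := NC_split σ S4
    have F := flip_sum ρ S4
    have F' := flip_sum σ S4
    have G := flip_sum σ S4
    omega
  rw [crossNum_NC, crossNum_NC]
  omega

theorem MONO (hm : 1 < 2 * n) {σ ρ : ZMod (2 * n) → ZMod (2 * n)}
    {a b : ZMod (2 * n)} (hM : IsMatching n σ)
    (H : Crosses (2 * n) a (σ a) b (σ b))
    (hρ : ρ = swapPair n σ a b ∨ ρ = swapPair n σ a (σ b)) :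
    crossNum n ρ + 1 ≤ crossNum n σ := by
  rcases hρ with h | h
  · rw [h]; exact MONO1 hm hM H
  · rw [h]
    have H2 : Crosses (2 * n) a (σ a) (σ b) (σ (σ b)) := by
      rw [hM.1]; exact symm3 H
    exact MONO1 hm hM H2


section Struct
variable {m : ℕ} [NeZero m]

lemma crossSwapAB (hm : 1 < m) {i a b c d : ZMod m}
    (hc1 : c ≠ i) (hc2 : c ≠ i + 1) (hd1 : d ≠ i) (hd2 : d ≠ i + 1) :
    Crosses m a b c d ↔
      Crosses m (Equiv.swap i (i + 1) a) (Equiv.swap i (i + 1) b) c d := by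
  by_cases hA1 : a = i
  · rw [hA1, Equiv.swap_apply_left]
    by_cases hB1 : b = i + 1
    · rw [hB1, Equiv.swap_apply_right]
      exact iff_of_false (L0a hm) (L0b hm)
    · by_cases hB0 : b = i
      · rw [hB0, Equiv.swap_apply_left]
        exact iff_of_false (fun H => H.1 rfl) (fun H => H.1 rfl)
      · rw [Equiv.swap_apply_of_ne_of_ne hB0 hB1]
        exact CS1 hm hB0 hB1 hc1 hc2 hd1 hd2
  · by_cases hA2 : a = i + 1
    · rw [hA2, Equiv.swap_apply_right]
      by_cases hB0 : b = i
      · rw [hB0, Equiv.swap_apply_left]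
        exact iff_of_false (L0b hm) (L0a hm)
      · by_cases hB1 : b = i + 1
        · rw [hB1, Equiv.swap_apply_right]
          exact iff_of_false (fun H => H.1 rfl) (fun H => H.1 rfl)
        · rw [Equiv.swap_apply_of_ne_of_ne hB0 hB1]
          exact (CS1 hm hB0 hB1 hc1 hc2 hd1 hd2).symm
    · rw [Equiv.swap_apply_of_ne_of_ne hA1 hA2]
      by_cases hB0 : b = i
      · rw [hB0, Equiv.swap_apply_left]
        constructor
        · intro h
          exact symm2 ((CS1 hm hA1 hA2 hc1 hc2 hd1 hd2).mp (symm2 h))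
        · intro h
          exact symm2 ((CS1 hm hA1 hA2 hc1 hc2 hd1 hd2).mpr (symm2 h))
      · by_cases hB1 : b = i + 1
        · rw [hB1, Equiv.swap_apply_right]
          constructor
          · intro h
            exact symm2 ((CS1 hm hA1 hA2 hc1 hc2 hd1 hd2).mpr (symm2 h))
          · intro h
            exact symm2 ((CS1 hm hA1 hA2 hc1 hc2 hd1 hd2).mp (symm2 h))
        · rw [Equiv.swap_apply_of_ne_of_ne hB0 hB1]

lemma crossSwapCD (hm : 1 < m) {i a b c d : ZMod m}
    (ha1 : a ≠ i) (ha2 : a ≠ i + 1) (hb1 : b ≠ i) (hb2 : b ≠ i + 1) :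
    Crosses m a b c d ↔
      Crosses m a b (Equiv.swap i (i + 1) c) (Equiv.swap i (i + 1) d) := by
  constructor
  · intro h
    exact symm1 ((crossSwapAB hm ha1 ha2 hb1 hb2).mp (symm1 h))
  · intro h
    exact symm1 ((crossSwapAB hm ha1 ha2 hb1 hb2).mpr (symm1 h))

end Struct

section Struct2
variable {n : ℕ} [NeZero (2 * n)]

/-- shorthand for the covering relation -/
def URel (n : ℕ) (x y : ZMod (2 * n) → ZMod (2 * n)) : Prop :=
  IsMatching n x ∧ IsMatching n y ∧ UncrossingMove n y x ∧
    crossNum n y = crossNum n x + 1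

lemma uncrossLE_def {τ σ : ZMod (2 * n) → ZMod (2 * n)} :
    UncrossLE n τ σ ↔ Relation.ReflTransGen (URel n) τ σ := Iff.rfl

lemma SPEC {σ : ZMod (2 * n) → ZMod (2 * n)} {i a c : ZMod (2 * n)}
    (hσ : IsMatching n σ) (hne : i + 1 ≠ i) (hd : σ i ≠ i + 1)
    (ha : a = i ∨ a = σ i) (hc : c = i + 1 ∨ c = σ (i + 1)) :
    swapPair n σ a c = swapPair n σ i (i + 1) ∨
      swapPair n σ a c = sMove n i σ := by
  have inv := hσ.1
  have e2 : σ (i + 1) ≠ i := by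
    intro h
    have := congrArg σ h
    rw [inv] at this
    exact hd this.symm
  have e3 : σ i ≠ σ (i + 1) := by
    intro h
    have := congrArg σ h
    rw [inv, inv] at this
    exact hne this.symm
  rcases ha with rfl | rfl <;> rcases hc with rfl | rfl
  · exact Or.inl rfl
  · exact Or.inr (VERT hσ hne hd)
  · exact Or.inr ((sp_mix hσ (Ne.symm hne) hd e2 e3).trans (VERT hσ hne hd))
  · exact Or.inl (sp_inv hσ (Ne.symm hne) hd e2 e3)

lemma CPROP (hm : 1 < 2 * n) {ρ σ : ZMod (2 * n) → ZMod (2 * n)}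
    {i : ZMod (2 * n)} (hstep : URel n ρ σ) (hC : σ i = i + 1) :
    ρ i = i + 1 := by
  obtain ⟨hρM, hσM, ⟨a, b, H, hopt⟩, -⟩ := hstep
  have inv := hσM.1
  have na : a ≠ i := by
    rintro rfl
    rw [hC] at H
    exact L0a hm H
  have nsa : σ a ≠ i := by
    intro h
    have h2 : a = σ i := by rw [← h, inv]
    rw [h2, hC] at H
    rw [show σ (i + 1) = i from by rw [← hC, inv]] at H
    exact L0b hm H
  have nb : b ≠ i := by
    rintro rfl
    rw [hC] at H
    exact L0a hm (symm1 H)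
  have nsb : σ b ≠ i := by
    intro h
    have h2 : b = σ i := by rw [← h, inv]
    rw [h2, hC] at H
    rw [show σ (i + 1) = i from by rw [← hC, inv]] at H
    exact L0b hm (symm1 H)
  rcases hopt with rfl | rfl
  · rw [sp_o (Ne.symm na) (Ne.symm nb) (Ne.symm nsa) (Ne.symm nsb)]
    exact hC
  · rw [sp_o (Ne.symm na) (Ne.symm nsb) (Ne.symm nsa)
      (by rw [inv]; exact Ne.symm nb)]
    exact hC

lemma CCHAIN (hm : 1 < 2 * n) {x y : ZMod (2 * n) → ZMod (2 * n)}
    {i : ZMod (2 * n)} (h : Relation.ReflTransGen (URel n) x y)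
    (hC : y i = i + 1) : x i = i + 1 := by
  induction h with
  | refl => exact hC
  | tail h1 h2 ih => exact ih (CPROP hm h2 hC)

lemma AofS (hm : 1 < 2 * n) {η : ZMod (2 * n) → ZMod (2 * n)}
    {i : ZMod (2 * n)} (hM : IsMatching n η) (hB : inB n η i) :
    inA n (sMove n i η) i := by
  obtain ⟨hB1, X⟩ := hB
  obtain ⟨d1, d2, d3, d4, d5, d6, -⟩ := id X
  have eA : sMove n i η i = η (i + 1) := sMove_i d5 (Ne.symm d2)
  have eB : sMove n i η (i + 1) = η i := sMove_i1 (hM.2 i) hB1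
  rw [inA, eA, eB]
  refine ⟨Ne.symm d2, ?_⟩
  intro H
  have v1 := (G2char hm (hM.2 i) hB1 d5 (Ne.symm d2) (Ne.symm d6)).mp X
  have v2 := (G2char hm d5 (Ne.symm d2) (hM.2 i) hB1 d6).mp H
  omega

lemma BofS (hm : 1 < 2 * n) {τ : ZMod (2 * n) → ZMod (2 * n)}
    {i : ZMod (2 * n)} (hM : IsMatching n τ) (hA : inA n τ i) :
    inB n (sMove n i τ) i := by
  obtain ⟨hA1, hA2⟩ := hA
  have hne := hii (m := 2 * n) hm i
  have w1 : τ i ≠ i := hM.2 i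
  have w2 : τ (i + 1) ≠ i + 1 := hM.2 _
  have w3 : τ (i + 1) ≠ i := by
    intro h
    have := congrArg τ h
    rw [hM.1] at this
    exact hA1 this.symm
  have w4 : τ i ≠ τ (i + 1) := by
    intro h
    have := congrArg τ h
    rw [hM.1, hM.1] at this
    exact hne this.symm
  have eA : sMove n i τ i = τ (i + 1) := sMove_i w3 w2
  have eB : sMove n i τ (i + 1) = τ i := sMove_i1 w1 hA1
  rw [inB, eA, eB]
  refine ⟨w2, ?_⟩
  have hv : ¬ ((τ i - i).val < (τ (i + 1) - i).val) := by
    intro v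
    exact hA2 ((G2char hm w1 hA1 w3 w2 w4).mpr v)
  have hv2 : (τ (i + 1) - i).val ≠ (τ i - i).val := fun h => w4 (vinj h).symm
  exact (G2char hm w3 w2 w1 hA1 (Ne.symm w4)).mpr (by omega)

lemma L1rel (hm : 1 < 2 * n) {η : ZMod (2 * n) → ZMod (2 * n)}
    {i : ZMod (2 * n)} (hM : IsMatching n η) (hB : inB n η i) :
    URel n (sMove n i η) η := by
  refine ⟨sMove_matching hM, hM, ⟨i, i + 1, hB.2, Or.inr ?_⟩, CN hm hM hB⟩
  exact (VERT hM (hii hm i) hB.1).symm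

lemma L2rel (hm : 1 < 2 * n) {τ : ZMod (2 * n) → ZMod (2 * n)}
    {i : ZMod (2 * n)} (hM : IsMatching n τ) (hA : inA n τ i) :
    URel n τ (sMove n i τ) := by
  have h := L1rel hm (sMove_matching hM) (BofS hm hM hA)
  rwa [sMove_invol] at h

end Struct2

section Struct3
variable {n : ℕ} [NeZero (2 * n)]

lemma coverCases (hm : 1 < 2 * n) {ρ σ : ZMod (2 * n) → ZMod (2 * n)}
    {i : ZMod (2 * n)} (hσ : IsMatching n σ) (hd : σ i ≠ i + 1)
    (hmove : UncrossingMove n σ ρ) :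
    ((ρ = swapPair n σ i (i + 1) ∨ ρ = sMove n i σ) ∧
      Crosses (2 * n) i (σ i) (i + 1) (σ (i + 1))) ∨
    (∃ a c, Crosses (2 * n) a (σ a) c (σ c) ∧ ρ = swapPair n σ a c ∧
      ((a ≠ i ∧ a ≠ i + 1 ∧ σ a ≠ i ∧ σ a ≠ i + 1) ∨
       (c ≠ i ∧ c ≠ i + 1 ∧ σ c ≠ i ∧ σ c ≠ i + 1))) := by
  have inv := hσ.1
  have hne := hii (m := 2 * n) hm i
  obtain ⟨a, b, H, hopt⟩ := hmove
  have main : ∀ c, Crosses (2 * n) a (σ a) c (σ c) → ρ = swapPair n σ a c →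
      ((ρ = swapPair n σ i (i + 1) ∨ ρ = sMove n i σ) ∧
        Crosses (2 * n) i (σ i) (i + 1) (σ (i + 1))) ∨
      (∃ a c, Crosses (2 * n) a (σ a) c (σ c) ∧ ρ = swapPair n σ a c ∧
        ((a ≠ i ∧ a ≠ i + 1 ∧ σ a ≠ i ∧ σ a ≠ i + 1) ∨
         (c ≠ i ∧ c ≠ i + 1 ∧ σ c ≠ i ∧ σ c ≠ i + 1))) := by
    intro c H' hρ
    obtain ⟨f1, f2, f3, f4, f5, f6, -⟩ := id H'
    by_cases ma : a = i ∨ a = i + 1 ∨ σ a = i ∨ σ a = i + 1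
    case neg =>
      push_neg at ma
      exact Or.inr ⟨a, c, H', hρ, Or.inl ⟨ma.1, ma.2.1, ma.2.2.1, ma.2.2.2⟩⟩
    by_cases mc : c = i ∨ c = i + 1 ∨ σ c = i ∨ σ c = i + 1
    case neg =>
      push_neg at mc
      exact Or.inr ⟨a, c, H', hρ, Or.inr ⟨mc.1, mc.2.1, mc.2.2.1, mc.2.2.2⟩⟩
    have repa : (a = i ∨ a = σ i) ∨ (a = i + 1 ∨ a = σ (i + 1)) := by
      rcases ma with h | h | h | h
      · exact Or.inl (Or.inl h)
      · exact Or.inr (Or.inl h)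
      · exact Or.inl (Or.inr (by rw [← h, inv]))
      · exact Or.inr (Or.inr (by rw [← h, inv]))
    have repc : (c = i ∨ c = σ i) ∨ (c = i + 1 ∨ c = σ (i + 1)) := by
      rcases mc with h | h | h | h
      · exact Or.inl (Or.inl h)
      · exact Or.inr (Or.inl h)
      · exact Or.inl (Or.inr (by rw [← h, inv]))
      · exact Or.inr (Or.inr (by rw [← h, inv]))
    -- helper: normalize a crossing with chord(i) first, chord(i+1) second
    have norm : ∀ u v : ZMod (2 * n), Crosses (2 * n) u (σ u) v (σ v) →
        (u = i ∨ u = σ i) → (v = i + 1 ∨ v = σ (i + 1)) →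
        Crosses (2 * n) i (σ i) (i + 1) (σ (i + 1)) := by
      intro u v Huv hu hv
      have base : Crosses (2 * n) i (σ i) v (σ v) := by
        rcases hu with rfl | rfl
        · exact Huv
        · rw [inv] at Huv
          exact symm2 Huv
      rcases hv with rfl | rfl
      · exact base
      · rw [inv] at base
        exact symm3 base
    rcases repa with ha | ha <;> rcases repc with hc | hc
    · -- both chord(i): contradiction
      exfalso
      rcases ha with ha | ha <;> rcases hc with hc | hc
      · exact f3 (hc.trans ha.symm)
      · exact f5 (by rw [hc, inv, ← ha])
      · exact f4 (by rw [hc, ha, inv])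
      · exact f3 (hc.trans ha.symm)
    · -- a ~ chord(i), c ~ chord(i+1)
      refine Or.inl ⟨?_, norm a c H' ha hc⟩
      rcases SPEC hσ hne hd ha hc with h | h
      · exact Or.inl (hρ.trans h)
      · exact Or.inr (hρ.trans h)
    · -- a ~ chord(i+1), c ~ chord(i)
      have hcomm : swapPair n σ a c = swapPair n σ c a :=
        sp_comm (Ne.symm f3) (Ne.symm f1) (Ne.symm f2) (Ne.symm f4) f5
          (Ne.symm f6)
      refine Or.inl ⟨?_, norm c a (symm1 H') hc ha⟩
      rcases SPEC hσ hne hd hc ha with h | h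
      · exact Or.inl ((hρ.trans hcomm).trans h)
      · exact Or.inr ((hρ.trans hcomm).trans h)
    · -- both chord(i+1): contradiction
      exfalso
      rcases ha with ha | ha <;> rcases hc with hc | hc
      · exact f3 (hc.trans ha.symm)
      · exact f5 (by rw [hc, inv, ← ha])
      · exact f4 (by rw [hc, ha, inv])
      · exact f3 (hc.trans ha.symm)
  rcases hopt with rfl | rfl
  · exact main b H rfl
  · refine main (σ b) ?_ rfl
    rw [inv]
    exact symm3 H

end Struct3

section Struct4
variable {n : ℕ} [NeZero (2 * n)]

lemma conjMove (hm : 1 < 2 * n) {σ : ZMod (2 * n) → ZMod (2 * n)}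
    {a c i : ZMod (2 * n)}
    (H' : Crosses (2 * n) a (σ a) c (σ c))
    (hav : (a ≠ i ∧ a ≠ i + 1 ∧ σ a ≠ i ∧ σ a ≠ i + 1) ∨
      (c ≠ i ∧ c ≠ i + 1 ∧ σ c ≠ i ∧ σ c ≠ i + 1)) :
    UncrossingMove n (sMove n i σ) (sMove n i (swapPair n σ a c)) := by
  have ev : ∀ x, sMove n i σ (Equiv.swap i (i + 1) x)
      = Equiv.swap i (i + 1) (σ x) := fun x => by
    simp [sMove, Equiv.swap_apply_self]
  refine ⟨Equiv.swap i (i + 1) a, Equiv.swap i (i + 1) c, ?_, Or.inl conjSwap⟩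
  rw [ev, ev]
  rcases hav with ⟨h1, h2, h3, h4⟩ | ⟨h1, h2, h3, h4⟩
  · rw [Equiv.swap_apply_of_ne_of_ne h1 h2, Equiv.swap_apply_of_ne_of_ne h3 h4]
    exact (crossSwapCD hm h1 h2 h3 h4).mp H'
  · rw [Equiv.swap_apply_of_ne_of_ne h1 h2, Equiv.swap_apply_of_ne_of_ne h3 h4]
    exact (crossSwapAB hm h1 h2 h3 h4).mp H'

lemma CONJ (hm : 1 < 2 * n) {ρ σ : ZMod (2 * n) → ZMod (2 * n)}
    {i : ZMod (2 * n)} (hstep : URel n ρ σ)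
    (hAB : (inB n ρ i ∧ inB n σ i) ∨ (inA n ρ i ∧ inA n σ i)) :
    URel n (sMove n i ρ) (sMove n i σ) := by
  obtain ⟨hρM, hσM, hmove, hcnt⟩ := hstep
  have hd : σ i ≠ i + 1 := by
    rcases hAB with ⟨_, h⟩ | ⟨_, h⟩ <;> exact h.1
  rcases coverCases hm hσM hd hmove with ⟨hform, hcross⟩ | ⟨a, c, H', hρ, hav⟩
  · exfalso
    rcases hform with h1 | h2
    · have hceq : ρ i = i + 1 := by rw [h1]; exact sp_a
      rcases hAB with ⟨hB, _⟩ | ⟨hA, _⟩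
      · exact hB.1 hceq
      · exact hA.1 hceq
    · rcases hAB with ⟨hBρ, hBσ⟩ | ⟨hAρ, hAσ⟩
      · have hAs := AofS hm hσM ⟨hd, hcross⟩
        rw [← h2] at hAs
        exact hAs.2 hBρ.2
      · exact hAσ.2 hcross
  · refine ⟨sMove_matching hρM, sMove_matching hσM, ?_, ?_⟩
    · rw [hρ]
      exact conjMove hm H' hav
    · rcases hAB with ⟨hBρ, hBσ⟩ | ⟨hAρ, hAσ⟩
      · have c1 := CN hm hρM hBρ
        have c2 := CN hm hσM hBσ
        omega
      · have c1 := CN hm (sMove_matching hρM) (BofS hm hρM hAρ)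
        have c2 := CN hm (sMove_matching hσM) (BofS hm hσM hAσ)
        rw [sMove_invol] at c1 c2
        omega

lemma TOPB (hm : 1 < 2 * n) {ρ η : ZMod (2 * n) → ZMod (2 * n)}
    {i : ZMod (2 * n)} (hstep : URel n ρ η) (hA : inA n ρ i)
    (hB : inB n η i) : η = sMove n i ρ := by
  obtain ⟨hρM, hηM, hmove, hcnt⟩ := hstep
  rcases coverCases hm hηM hB.1 hmove with ⟨hform, -⟩ | ⟨a, c, H', hρ, hav⟩
  · rcases hform with h1 | h2
    · exact absurd (by rw [h1]; exact sp_a) hA.1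
    · rw [h2, sMove_invol]
  · exfalso
    have hmv := conjMove (σ := η) hm H' hav
    rw [← hρ] at hmv
    obtain ⟨u, v, HH, hopt⟩ := hmv
    have hmono := MONO hm (sMove_matching hηM) HH hopt
    have c1 := CN hm hηM hB
    have c2 := CN hm (sMove_matching hρM) (BofS hm hρM hA)
    rw [sMove_invol] at c2
    omega

theorem lifting_master (hm : 1 < 2 * n)
    {τ η : ZMod (2 * n) → ZMod (2 * n)}
    (hle : Relation.ReflTransGen (URel n) τ η) :
    ∀ i : ZMod (2 * n),
      ((inA n τ i → inB n η i →
        Relation.ReflTransGen (URel n) τ (sMove n i η) ∧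
        Relation.ReflTransGen (URel n) (sMove n i τ) η) ∧
      (inA n τ i → inA n η i →
        Relation.ReflTransGen (URel n) (sMove n i τ) (sMove n i η))) := by
  induction hle with
  | refl =>
    intro i
    constructor
    · intro hA hB; exact absurd hB.2 hA.2
    · intro _ _; exact Relation.ReflTransGen.refl
  | @tail ρ η'' hchain hstep ih =>
    intro i
    have hMρ := hstep.1
    have hMη := hstep.2.1
    constructor
    · intro hA hB
      by_cases hC : ρ i = i + 1
      · exact absurd (CCHAIN hm hchain hC) hA.1
      · by_cases hX : Crosses (2 * n) i (ρ i) (i + 1) (ρ (i + 1))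
        · have hBρ : inB n ρ i := ⟨hC, hX⟩
          obtain ⟨g1, g2⟩ := (ih i).1 hA hBρ
          exact ⟨g1.tail (CONJ hm hstep (Or.inl ⟨hBρ, hB⟩)), g2.tail hstep⟩
        · have hAρ : inA n ρ i := ⟨hC, hX⟩
          have hEq : η'' = sMove n i ρ := TOPB hm hstep hAρ hB
          constructor
          · rw [hEq, sMove_invol]; exact hchain
          · rw [hEq]; exact (ih i).2 hA hAρ
    · intro hA hA'
      by_cases hC : ρ i = i + 1
      · exact absurd (CCHAIN hm hchain hC) hA.1
      · by_cases hX : Crosses (2 * n) i (ρ i) (i + 1) (ρ (i + 1))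
        · have hBρ : inB n ρ i := ⟨hC, hX⟩
          have g2 := ((ih i).1 hA hBρ).2
          exact (g2.tail hstep).tail (L2rel hm hMη hA')
        · have hAρ : inA n ρ i := ⟨hC, hX⟩
          exact ((ih i).2 hA hAρ).tail (CONJ hm hstep (Or.inr ⟨hAρ, hA'⟩))

end Struct4

/-- If `τ ≤ η` in the uncrossing order and `i ∈ A(τ) ∩ B(η)`, then
`τ ≤ s_i·η` and `s_i·τ ≤ η`. -/
theorem lifting_property (n : ℕ) (hn : 1 ≤ n)
    (τ η : ZMod (2 * n) → ZMod (2 * n))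
    (hτ : IsMatching n τ) (hη : IsMatching n η)
    (hle : UncrossLE n τ η) (i : ZMod (2 * n))
    (hiA : inA n τ i) (hiB : inB n η i) :
    UncrossLE n τ (sMove n i η) ∧ UncrossLE n (sMove n i τ) η := by
  haveI : NeZero (2 * n) := ⟨by omega⟩
  have hm : 1 < 2 * n := by omega
  exact (lifting_master hm hle i).1 hiA hiB
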